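/- Let p ≥ 2 be an even integer, let S : [0,T] → ℝ have a continuous local time of order p along π (uniform limit L^{S,p,c} of the discrete local times, jointly continuous), and let f ∈ C¹(ℝ,ℝ) be strictly monotone. Then f∘S also has a continuous local time of order p along π, and for every a ∈ ℝ and t ∈ [0,T], L_t^{f(S),p,c}(f(a)) = |f'(a)|^{p-1} · L_t^{S,p,c}(a). -/

import Mathlib

open Filter MeasureTheory Set

/-- A nested sequence of partitions `0 = t_0^n < t_1^n < ... < t_{N(n)}^n = T` of `[0, T]`. -/
structure PartitionSeq (T : ℝ) where
  N : ℕ → ℕ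
  pos : ∀ n, 0 < N n
  pt : ℕ → ℕ → ℝ
  pt_zero : ∀ n, pt n 0 = 0
  pt_last : ∀ n, pt n (N n) = T
  pt_mono : ∀ n, ∀ j, j < N n → pt n j < pt n (j + 1)
  nested : ∀ n, ∀ j, j ≤ N n → ∃ j', j' ≤ N (n + 1) ∧ pt (n + 1) j' = pt n j

/-- Oscillation of `S` along the partition `π_n`. -/
noncomputable def oscP {T : ℝ} (S : ℝ → ℝ) (P : PartitionSeq T) (n : ℕ) : ℝ :=
  sSup {y | ∃ j < P.N n, ∃ u ∈ Icc (P.pt n j) (P.pt n (j + 1)),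
    ∃ v ∈ Icc (P.pt n j) (P.pt n (j + 1)), y = |S u - S v|}

/-- Mesh of the partition `π_n`. -/
noncomputable def meshP {T : ℝ} (P : PartitionSeq T) (n : ℕ) : ℝ :=
  sSup {y | ∃ j < P.N n, y = P.pt n (j + 1) - P.pt n j}

/-- Partial sums `Σ_{t_j ≤ t} |S(t_{j+1}) - S(t_j)|^p` of `p`-th variation along `π_n`. -/
noncomputable def pvarSum {T : ℝ} (S : ℝ → ℝ) (P : PartitionSeq T) (p : ℝ) (n : ℕ) (t : ℝ) : ℝ :=
  ∑ j ∈ Finset.range (P.N n),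
    if P.pt n j ≤ t then |S (P.pt n (j + 1)) - S (P.pt n j)| ^ p else 0

/-- Discrete local time of order `p` of `S` along `π_n`:
`L_t^{π_n;p}(x) = Σ_{t_j ≤ t} 1_{⦇S(t_j),S(t_{j+1})⦈}(x) |S(t_{j+1}) - x|^{p-1}`. -/
noncomputable def discLT {T : ℝ} (S : ℝ → ℝ) (P : PartitionSeq T) (p : ℕ) (n : ℕ)
    (t x : ℝ) : ℝ :=
  ∑ j ∈ Finset.range (P.N n),
    if P.pt n j ≤ t then
      Set.indicator (Set.uIoc (S (P.pt n j)) (S (P.pt n (j + 1))))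
        (fun _ => |S (P.pt n (j + 1)) - x| ^ (p - 1)) x
    else 0

/-- `S` has a continuous local time `L` of order `p` along `P`: the oscillations tend to `0`,
the discrete local times converge uniformly in `x` for each `t ∈ [0,T]`, and the limit is
jointly continuous. -/
def HasCLT {T : ℝ} (P : PartitionSeq T) (p : ℕ) (S : ℝ → ℝ) (L : ℝ → ℝ → ℝ) : Prop :=
  Tendsto (oscP S P) atTop (nhds 0) ∧
  (∀ t ∈ Icc (0 : ℝ) T, TendstoUniformly (fun n x => discLT S P p n t x) (fun x => L t x) atTop) ∧
  Continuous (fun q : ℝ × ℝ => L q.1 q.2)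

/-- `S ∈ V_p(π)` with `p`-th variation function `V`. -/
def HasPVar {T : ℝ} (P : PartitionSeq T) (p : ℝ) (S : ℝ → ℝ) (V : ℝ → ℝ) : Prop :=
  Tendsto (oscP S P) atTop (nhds 0) ∧
  ContinuousOn V (Icc 0 T) ∧ MonotoneOn V (Icc 0 T) ∧
  ∀ t ∈ Icc (0 : ℝ) T, Tendsto (fun n => pvarSum S P p n t) atTop (nhds (V t))

namespace LTProp2Aux

/-- order-symmetric Ioc. -/
def IocV : ℝ → ℝ → Set ℝ := fun a b => Set.Ioc (min a b) (max a b)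

/-- order-symmetric Ico. -/
def IcoV : ℝ → ℝ → Set ℝ := fun a b => Set.Ico (min a b) (max a b)

/-- Generalized discrete local time sum. -/
noncomputable def gsum {T : ℝ} (f S : ℝ → ℝ) (P : PartitionSeq T) (q : ℕ)
    (I : ℝ → ℝ → Set ℝ) (n : ℕ) (t x : ℝ) : ℝ :=
  ∑ j ∈ Finset.range (P.N n),
    if P.pt n j ≤ t then
      Set.indicator (I (S (P.pt n j)) (S (P.pt n (j + 1))))
        (fun _ => |f (S (P.pt n (j + 1))) - f x| ^ q) x
    else 0

lemma discLT_eq_gsum {T : ℝ} (S : ℝ → ℝ) (P : PartitionSeq T) (p n : ℕ) (t x : ℝ) :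
    discLT S P p n t x = gsum id S P (p - 1) IocV n t x := rfl

lemma median {α β u : ℝ} (h : α ≤ β) : min β (max u α) = max α (min u β) := by
  rcases le_total u α with h1 | h1
  · rw [max_eq_right h1, min_eq_right h, min_eq_left (h1.trans h), max_eq_left h1]
  · rcases le_total u β with h2 | h2
    · rw [max_eq_left h1, min_eq_right h2, min_eq_left h2, max_eq_right h1]
    · rw [max_eq_left h1, min_eq_left h2, min_eq_right h2, max_eq_right h]

lemma pt_le_pt {T : ℝ} (P : PartitionSeq T) (n : ℕ) :
    ∀ {j k : ℕ}, j ≤ k → k ≤ P.N n → P.pt n j ≤ P.pt n k := by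
  intro j k hjk hk
  induction k with
  | zero => obtain rfl : j = 0 := Nat.le_zero.mp hjk; exact le_rfl
  | succ k ih =>
    rcases Nat.eq_or_lt_of_le hjk with rfl | hlt
    · exact le_rfl
    · exact (ih (Nat.lt_succ_iff.mp hlt) (by omega)).trans (P.pt_mono n k (by omega)).le

lemma pt_mem {T : ℝ} (P : PartitionSeq T) (n j : ℕ) (hj : j ≤ P.N n) :
    P.pt n j ∈ Icc (0 : ℝ) T := by
  constructor
  · have h := pt_le_pt P n (Nat.zero_le j) hj
    rwa [P.pt_zero] at h
  · have h := pt_le_pt P n hj le_rfl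
    rwa [P.pt_last] at h

lemma le_osc {T : ℝ} (P : PartitionSeq T) (S : ℝ → ℝ) {m M : ℝ}
    (hSb : ∀ u ∈ Icc (0 : ℝ) T, S u ∈ Icc m M) {n j : ℕ} (hj : j < P.N n) {u v : ℝ}
    (hu : u ∈ Icc (P.pt n j) (P.pt n (j + 1))) (hv : v ∈ Icc (P.pt n j) (P.pt n (j + 1))) :
    |S u - S v| ≤ oscP S P n := by
  apply le_csSup
  · refine ⟨M - m, ?_⟩
    rintro y ⟨j', hj', u', hu', v', hv', rfl⟩
    have hsub : Icc (P.pt n j') (P.pt n (j' + 1)) ⊆ Icc (0 : ℝ) T :=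
      Icc_subset_Icc (pt_mem P n j' hj'.le).1 (pt_mem P n (j' + 1) hj').2
    have h1 := hSb u' (hsub hu'); have h2 := hSb v' (hsub hv')
    rw [abs_sub_le_iff]
    constructor <;> [linarith [h1.2, h2.1]; linarith [h1.1, h2.2]]
  · exact ⟨j, hj, u, hu, v, hv, rfl⟩

lemma gsum_nonneg {T : ℝ} (f S : ℝ → ℝ) (P : PartitionSeq T) (q : ℕ)
    (I : ℝ → ℝ → Set ℝ) (n : ℕ) (t x : ℝ) : 0 ≤ gsum f S P q I n t x := by
  refine Finset.sum_nonneg fun j _ => ?_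
  split
  · exact Set.indicator_nonneg (fun _ _ => by positivity) _
  · exact le_rfl

lemma gsum_le_gsum_T {T : ℝ} (f S : ℝ → ℝ) (P : PartitionSeq T) (q : ℕ)
    (I : ℝ → ℝ → Set ℝ) (n : ℕ) {t : ℝ} (h : t ≤ T) (x : ℝ) :
    gsum f S P q I n t x ≤ gsum f S P q I n T x := by
  refine Finset.sum_le_sum fun j hj => ?_
  rw [Finset.mem_range] at hj
  have hjT : P.pt n j ≤ T := (pt_mem P n j hj.le).2
  by_cases hc : P.pt n j ≤ t
  · rw [if_pos hc, if_pos hjT]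
  · rw [if_neg hc, if_pos hjT]
    exact Set.indicator_nonneg (fun _ _ => by positivity) _

lemma gsum_vanish {T : ℝ} (P : PartitionSeq T) (q : ℕ) (X : ℝ → ℝ) {c d : ℝ}
    (hXb : ∀ u ∈ Icc (0 : ℝ) T, X u ∈ Icc c d) (n : ℕ) (t : ℝ) {y : ℝ}
    (hy : y ≤ c ∨ d < y) : gsum id X P q IocV n t y = 0 := by
  refine Finset.sum_eq_zero fun j hj => ?_
  rw [Finset.mem_range] at hj
  have ha := hXb _ (pt_mem P n j hj.le)
  have hb := hXb _ (pt_mem P n (j + 1) hj)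
  have hnm : y ∉ IocV (X (P.pt n j)) (X (P.pt n (j + 1))) := by
    intro hmem
    obtain ⟨h1, h2⟩ := Set.mem_Ioc.mp hmem
    rcases hy with hy | hy
    · have := le_min ha.1 hb.1
      linarith
    · have := max_le ha.2 hb.2
      linarith
  rw [Set.indicator_of_notMem hnm]
  simp

lemma gsum_pullback {T : ℝ} (f S : ℝ → ℝ) (P : PartitionSeq T) (q : ℕ)
    (I : ℝ → ℝ → Set ℝ) (hpull : ∀ a b x : ℝ, f x ∈ IocV (f a) (f b) ↔ x ∈ I a b)
    (n : ℕ) (t x : ℝ) :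
    gsum id (fun u => f (S u)) P q IocV n t (f x) = gsum f S P q I n t x := by
  refine Finset.sum_congr rfl fun j _ => ?_
  by_cases hc : P.pt n j ≤ t
  · rw [if_pos hc, if_pos hc]
    by_cases hmem : x ∈ I (S (P.pt n j)) (S (P.pt n (j + 1)))
    · rw [Set.indicator_of_mem ((hpull _ _ _).mpr hmem), Set.indicator_of_mem hmem]
      simp
    · rw [Set.indicator_of_notMem (fun h => hmem ((hpull _ _ _).mp h)),
        Set.indicator_of_notMem hmem]
  · rw [if_neg hc, if_neg hc]

lemma pull_mono {f : ℝ → ℝ} (hm : StrictMono f) (a b x : ℝ) :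
    f x ∈ IocV (f a) (f b) ↔ x ∈ IocV a b := by
  simp only [IocV, Set.mem_Ioc]
  rw [← hm.monotone.map_min, ← hm.monotone.map_max, hm.lt_iff_lt, hm.le_iff_le]

lemma pull_anti {f : ℝ → ℝ} (hm : StrictAnti f) (a b x : ℝ) :
    f x ∈ IocV (f a) (f b) ↔ x ∈ IcoV a b := by
  simp only [IocV, IcoV, Set.mem_Ioc, Set.mem_Ico]
  rw [← hm.antitone.map_max, ← hm.antitone.map_min, hm.lt_iff_gt, hm.le_iff_ge]
  exact and_comm

lemma mvt_term {f : ℝ → ℝ} (hf : ContDiff ℝ 1 f) {q : ℕ} (hq : 1 ≤ q) {m M x b δ ε₁ : ℝ}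
    (hx : x ∈ Icc m M) (hb : b ∈ Icc m M) (hbx : |b - x| < δ)
    (hδ : ∀ u ∈ Icc m M, ∀ v ∈ Icc m M, |u - v| < δ →
      abs (|deriv f u| ^ q - |deriv f v| ^ q) ≤ ε₁) :
    abs (|f b - f x| ^ q - |deriv f x| ^ q * |b - x| ^ q) ≤ ε₁ * |b - x| ^ q := by
  rcases eq_or_ne b x with rfl | hne
  · simp [zero_pow (by omega : q ≠ 0)]
  · have hdiff : ∀ y, HasDerivAt f (deriv f y) y := fun y =>
      ((hf.differentiable one_ne_zero) y).hasDerivAt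
    obtain ⟨ξ, hξmem, hξ⟩ : ∃ ξ, ξ ∈ Ioo (min x b) (max x b) ∧
        f b - f x = deriv f ξ * (b - x) := by
      rcases hne.lt_or_gt with hlt | hlt
      · obtain ⟨ζ, hζ, hζ2⟩ := exists_hasDerivAt_eq_slope f (deriv f) hlt
          hf.continuous.continuousOn (fun y _ => hdiff y)
        refine ⟨ζ, by simpa [min_eq_right hlt.le, max_eq_left hlt.le] using hζ, ?_⟩
        have h3 : f x - f b = deriv f ζ * (x - b) := by
          rw [hζ2]
          exact (div_mul_cancel₀ _ (sub_ne_zero.mpr hlt.ne')).symm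
        have h4 : deriv f ζ * (b - x) = -(deriv f ζ * (x - b)) := by ring
        rw [h4, ← h3]; ring
      · obtain ⟨ζ, hζ, hζ2⟩ := exists_hasDerivAt_eq_slope f (deriv f) hlt
          hf.continuous.continuousOn (fun y _ => hdiff y)
        refine ⟨ζ, by simpa [min_eq_left hlt.le, max_eq_right hlt.le] using hζ, ?_⟩
        rw [hζ2]
        exact (div_mul_cancel₀ _ (sub_ne_zero.mpr hlt.ne')).symm
    have hξIcc : ξ ∈ Icc m M :=
      ⟨le_trans (le_min hx.1 hb.1) hξmem.1.le, le_trans hξmem.2.le (max_le hx.2 hb.2)⟩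
    have hξx : |ξ - x| < δ := by
      have h1 : |ξ - x| ≤ max x b - min x b := by
        rw [abs_sub_le_iff]
        constructor
        · linarith [hξmem.2.le, min_le_left x b]
        · linarith [hξmem.1.le, le_max_left x b]
      have h2 : max x b - min x b = |b - x| := max_sub_min_eq_abs x b
      linarith
    rw [hξ, abs_mul, mul_pow, ← sub_mul, abs_mul,
      abs_of_nonneg (pow_nonneg (abs_nonneg (b - x)) q)]
    exact mul_le_mul_of_nonneg_right (hδ ξ hξIcc x hx hξx) (by positivity)

lemma gsum_mvt {T : ℝ} (P : PartitionSeq T) {q : ℕ} (hq : 1 ≤ q) (f S : ℝ → ℝ)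
    (hf : ContDiff ℝ 1 f) (I : ℝ → ℝ → Set ℝ) (hI : ∀ a b, I a b ⊆ Set.uIcc a b)
    {m M δ ε₁ : ℝ} (n : ℕ) (t : ℝ) {x : ℝ} (hx : x ∈ Icc m M)
    (hbd : ∀ j, j ≤ P.N n → S (P.pt n j) ∈ Icc m M)
    (hosc : ∀ j, j < P.N n → |S (P.pt n (j + 1)) - S (P.pt n j)| < δ)
    (hδ : ∀ u ∈ Icc m M, ∀ v ∈ Icc m M, |u - v| < δ →
      abs (|deriv f u| ^ q - |deriv f v| ^ q) ≤ ε₁) :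
    |gsum f S P q I n t x - |deriv f x| ^ q * gsum id S P q I n t x| ≤
      ε₁ * gsum id S P q I n t x := by
  unfold gsum
  rw [Finset.mul_sum, ← Finset.sum_sub_distrib, Finset.mul_sum]
  refine (Finset.abs_sum_le_sum_abs _ _).trans (Finset.sum_le_sum fun j hj => ?_)
  rw [Finset.mem_range] at hj
  by_cases hc : P.pt n j ≤ t
  · simp only [if_pos hc]
    by_cases hmem : x ∈ I (S (P.pt n j)) (S (P.pt n (j + 1)))
    · rw [Set.indicator_of_mem hmem, Set.indicator_of_mem hmem]
      have hxm : x ∈ Icc (min (S (P.pt n j)) (S (P.pt n (j + 1))))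
          (max (S (P.pt n j)) (S (P.pt n (j + 1)))) := hI _ _ hmem
      have ha := hbd j hj.le
      have hb := hbd (j + 1) hj
      have hbx : |S (P.pt n (j + 1)) - x| < δ := by
        have h1 : |S (P.pt n (j + 1)) - x| ≤
            max (S (P.pt n j)) (S (P.pt n (j + 1))) -
            min (S (P.pt n j)) (S (P.pt n (j + 1))) := by
          rw [abs_sub_le_iff]
          constructor
          · linarith [le_max_right (S (P.pt n j)) (S (P.pt n (j + 1))), hxm.1]
          · linarith [min_le_right (S (P.pt n j)) (S (P.pt n (j + 1))), hxm.2]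
        have h2 := max_sub_min_eq_abs (S (P.pt n j)) (S (P.pt n (j + 1)))
        have h3 : |S (P.pt n (j + 1)) - S (P.pt n j)| < δ := hosc j hj
        linarith
      exact mvt_term hf hq hx hb hbx hδ
    · rw [Set.indicator_of_notMem hmem, Set.indicator_of_notMem hmem]
      simp
  · simp [hc]

lemma gsum_Ico_rightLim {T : ℝ} (P : PartitionSeq T) (q : ℕ) (S : ℝ → ℝ) (n : ℕ) (t x : ℝ) :
    Tendsto (fun y => gsum id S P q IocV n t y) (nhdsWithin x (Ioi x))
      (nhds (gsum id S P q IcoV n t x)) := by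
  unfold gsum
  refine tendsto_finset_sum _ fun j _ => ?_
  by_cases hc : P.pt n j ≤ t
  · simp only [if_pos hc]
    set a := S (P.pt n j)
    set b := S (P.pt n (j + 1))
    by_cases hmem : x ∈ IcoV a b
    · rw [Set.indicator_of_mem hmem]
      have hmem2 := Set.mem_Ico.mp hmem
      have hnice : Tendsto (fun y : ℝ => |id b - id y| ^ q) (nhdsWithin x (Ioi x))
          (nhds (|id b - id x| ^ q)) :=
        (((continuous_const.sub continuous_id).abs.pow q).tendsto x).mono_left
          nhdsWithin_le_nhds
      refine Filter.Tendsto.congr' ?_ hnice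
      filter_upwards [Ioo_mem_nhdsGT_of_mem ⟨le_rfl, hmem2.2⟩] with y hy
      have hmemy : y ∈ IocV a b :=
        Set.mem_Ioc.mpr ⟨lt_of_le_of_lt (Set.mem_Ico.mp hmem).1 hy.1, hy.2.le⟩
      exact (Set.indicator_of_mem hmemy fun _ => |id b - id y| ^ q).symm
    · simp only [Set.indicator_of_notMem hmem]
      have hcase : x < min a b ∨ max a b ≤ x := by
        by_contra hcon
        push_neg at hcon
        exact hmem (Set.mem_Ico.mpr ⟨hcon.1, hcon.2⟩)
      rcases hcase with hlt | hge
      · refine Filter.Tendsto.congr' ?_ tendsto_const_nhds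
        filter_upwards [Ioo_mem_nhdsGT_of_mem ⟨le_rfl, hlt⟩] with y hy
        exact (Set.indicator_of_notMem (fun h => absurd hy.2 (not_lt.mpr (Set.mem_Ioc.mp h).1.le)) _).symm
      · refine Filter.Tendsto.congr' ?_ tendsto_const_nhds
        filter_upwards [self_mem_nhdsWithin] with y hy
        exact (Set.indicator_of_notMem
          (fun h => absurd (Set.mem_Ioc.mp h).2 (not_le.mpr (lt_of_le_of_lt hge hy))) _).symm
  · simp only [if_neg hc]
    exact tendsto_const_nhds

lemma unif_transfer {T : ℝ} (P : PartitionSeq T) (q : ℕ) (S : ℝ → ℝ) (Lc : ℝ → ℝ)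
    (hLc : Continuous Lc) {n : ℕ} {t ε : ℝ}
    (h : ∀ y, |gsum id S P q IocV n t y - Lc y| ≤ ε) (x : ℝ) :
    |gsum id S P q IcoV n t x - Lc x| ≤ ε := by
  have h1 : Tendsto (fun y => |gsum id S P q IocV n t y - Lc y|) (nhdsWithin x (Ioi x))
      (nhds (|gsum id S P q IcoV n t x - Lc x|)) :=
    ((gsum_Ico_rightLim P q S n t x).sub
      ((hLc.tendsto x).mono_left nhdsWithin_le_nhds)).abs
  exact le_of_tendsto h1 (Eventually.of_forall h)

lemma key_unif {T : ℝ} (hT : 0 < T) (P : PartitionSeq T) {q : ℕ} (hq : 1 ≤ q)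
    (S : ℝ → ℝ) {m M : ℝ} (hmM : m ≤ M) (hSb : ∀ u ∈ Icc (0 : ℝ) T, S u ∈ Icc m M)
    (f : ℝ → ℝ) (hf : ContDiff ℝ 1 f)
    (I : ℝ → ℝ → Set ℝ) (hI : ∀ a b, I a b ⊆ Set.uIcc a b)
    (hpull : ∀ a b x : ℝ, f x ∈ IocV (f a) (f b) ↔ x ∈ I a b)
    (hfSb : ∀ u ∈ Icc (0 : ℝ) T, f (S u) ∈ Icc (min (f m) (f M)) (max (f m) (f M)))
    (hsurj : ∀ y ∈ Icc (min (f m) (f M)) (max (f m) (f M)), ∃ x ∈ Icc m M, f x = y)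
    (hoscS : Tendsto (oscP S P) atTop (nhds 0))
    {t : ℝ} (ht : t ∈ Icc (0 : ℝ) T)
    (Lt LT : ℝ → ℝ)
    (hunift : TendstoUniformly (fun n x => gsum id S P q I n t x) Lt atTop)
    (hunifT : TendstoUniformly (fun n x => gsum id S P q I n T x) LT atTop)
    {C H : ℝ} (hC : ∀ z, LT z ≤ C) (hH : ∀ z ∈ Icc m M, |deriv f z| ^ q ≤ H)
    (L' : ℝ → ℝ) (hL'in : ∀ x ∈ Icc m M, L' (f x) = |deriv f x| ^ q * Lt x)
    (hL'out : ∀ y : ℝ, (y < min (f m) (f M) ∨ max (f m) (f M) < y) → L' y = 0) :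
    TendstoUniformly (fun n y => gsum id (fun u => f (S u)) P q IocV n t y) L' atTop := by
  have hH0 : 0 ≤ H := le_trans (by positivity) (hH m ⟨le_rfl, hmM⟩)
  have hLT0 : 0 ≤ LT m :=
    ge_of_tendsto (hunifT.tendsto_at m)
      (Eventually.of_forall fun n => gsum_nonneg id S P q I n T m)
  have hC0 : 0 ≤ C := hLT0.trans (hC m)
  rw [Metric.tendstoUniformly_iff]
  intro ε hε
  set ε₁ := ε / (2 * (C + 2)) with hε₁def
  set ε₂ := ε / (2 * (H + 1)) with hε₂def
  have hε₁0 : 0 < ε₁ := by rw [hε₁def]; positivity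
  have hε₂0 : 0 < ε₂ := by rw [hε₂def]; positivity
  have hucont : ContinuousOn (fun z => |deriv f z| ^ q) (Icc m M) :=
    (((hf.continuous_deriv le_rfl).abs).pow q).continuousOn
  have huc := (isCompact_Icc.uniformContinuousOn_of_continuous hucont)
  rw [Metric.uniformContinuousOn_iff] at huc
  obtain ⟨δ, hδ0, hδ⟩ := huc ε₁ hε₁0
  have hδ' : ∀ u ∈ Icc m M, ∀ v ∈ Icc m M, |u - v| < δ →
      abs (|deriv f u| ^ q - |deriv f v| ^ q) ≤ ε₁ := by
    intro u hu v hv h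
    have := hδ u hu v hv (by rwa [Real.dist_eq])
    rw [Real.dist_eq] at this
    exact this.le
  have hev1 : ∀ᶠ n in atTop, oscP S P n < δ := hoscS.eventually_lt_const hδ0
  have hev2 := (Metric.tendstoUniformly_iff.mp hunift) ε₂ hε₂0
  have hev3 := (Metric.tendstoUniformly_iff.mp hunifT) 1 one_pos
  filter_upwards [hev1, hev2, hev3] with n h1 h2 h3
  intro y
  rw [Real.dist_eq]
  by_cases hy : y ∈ Icc (min (f m) (f M)) (max (f m) (f M))
  · obtain ⟨x, hx, rfl⟩ := hsurj y hy
    rw [gsum_pullback f S P q I hpull n t x, hL'in x hx]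
    have hosc' : ∀ j, j < P.N n → |S (P.pt n (j + 1)) - S (P.pt n j)| < δ := by
      intro j hj
      refine lt_of_le_of_lt (le_osc P S hSb hj ?_ ?_) h1
      · exact ⟨(P.pt_mono n j hj).le, le_rfl⟩
      · exact ⟨le_rfl, (P.pt_mono n j hj).le⟩
    have hbd : ∀ j, j ≤ P.N n → S (P.pt n j) ∈ Icc m M := fun j hj =>
      hSb _ (pt_mem P n j hj)
    have hmvt := gsum_mvt P hq f S hf I hI n t hx hbd hosc' hδ'
    have hbound : gsum id S P q I n t x ≤ C + 1 := by
      have hbT := h3 x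
      rw [Real.dist_eq, abs_sub_lt_iff] at hbT
      have hmono := gsum_le_gsum_T id S P q I n ht.2 x
      have := hC x
      linarith [hbT.1, hbT.2]
    have hclose := h2 x
    rw [Real.dist_eq] at hclose
    have step1 : |gsum f S P q I n t x - |deriv f x| ^ q * gsum id S P q I n t x| ≤
        ε₁ * (C + 1) :=
      hmvt.trans (mul_le_mul_of_nonneg_left hbound hε₁0.le)
    have step2 : |deriv f x| ^ q * |Lt x - gsum id S P q I n t x| ≤ H * ε₂ := by
      refine mul_le_mul (hH x hx) ?_ (abs_nonneg _) hH0
      exact hclose.le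
    have htri : abs (|deriv f x| ^ q * Lt x - gsum f S P q I n t x) ≤
        |deriv f x| ^ q * |Lt x - gsum id S P q I n t x| +
        |gsum f S P q I n t x - |deriv f x| ^ q * gsum id S P q I n t x| := by
      have habs : abs (|deriv f x| ^ q * Lt x - gsum f S P q I n t x) =
          abs ((|deriv f x| ^ q * (Lt x - gsum id S P q I n t x)) +
           (|deriv f x| ^ q * gsum id S P q I n t x - gsum f S P q I n t x)) := by
        ring_nf
      rw [habs]
      refine (abs_add_le _ _).trans ?_
      rw [abs_mul, abs_of_nonneg (pow_nonneg (abs_nonneg (deriv f x)) q),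
        abs_sub_comm (|deriv f x| ^ q * gsum id S P q I n t x) (gsum f S P q I n t x)]
    have hnum1 : ε₁ * (C + 2) = ε / 2 := by
      rw [hε₁def]; field_simp
    have hnum2 : ε₂ * (H + 1) = ε / 2 := by
      rw [hε₂def]; field_simp
    have : ε₁ * (C + 1) + H * ε₂ < ε := by nlinarith
    calc abs (|deriv f x| ^ q * Lt x - gsum f S P q I n t x) ≤ _ := htri
      _ ≤ H * ε₂ + ε₁ * (C + 1) := add_le_add step2 step1
      _ < ε := by linarith
  · have hcase : y < min (f m) (f M) ∨ max (f m) (f M) < y := by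
      by_contra hcon
      push_neg at hcon
      exact hy ⟨hcon.1, hcon.2⟩
    have h0 : gsum id (fun u => f (S u)) P q IocV n t y = 0 := by
      refine gsum_vanish P q _ hfSb n t ?_
      rcases hcase with h | h
      · exact Or.inl h.le
      · exact Or.inr h
    rw [h0, hL'out y hcase, sub_zero, abs_zero]
    exact hε

lemma osc_comp {T : ℝ} (P : PartitionSeq T) (S f : ℝ → ℝ) {m M : ℝ}
    (hSb : ∀ u ∈ Icc (0 : ℝ) T, S u ∈ Icc m M) (hfc : Continuous f)
    (hosc : Tendsto (oscP S P) atTop (nhds 0)) :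
    Tendsto (oscP (fun u => f (S u)) P) atTop (nhds 0) := by
  rw [Metric.tendsto_atTop]
  intro ε hε
  have huc := (isCompact_Icc (a := m) (b := M)).uniformContinuousOn_of_continuous
    hfc.continuousOn
  rw [Metric.uniformContinuousOn_iff] at huc
  obtain ⟨δ, hδ0, hδ⟩ := huc (ε / 2) (by linarith)
  obtain ⟨N, hN⟩ := eventually_atTop.mp (hosc.eventually_lt_const hδ0)
  refine ⟨N, fun n hn => ?_⟩
  have hlt := hN n hn
  rw [Real.dist_eq, sub_zero]
  unfold oscP
  set E := {y | ∃ j < P.N n, ∃ u ∈ Icc (P.pt n j) (P.pt n (j + 1)),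
    ∃ v ∈ Icc (P.pt n j) (P.pt n (j + 1)), y = |f (S u) - f (S v)|} with hE
  have hne : (0 : ℝ) ∈ E := by
    refine ⟨0, P.pos n, P.pt n 0, ⟨le_rfl, (P.pt_mono n 0 (P.pos n)).le⟩,
      P.pt n 0, ⟨le_rfl, (P.pt_mono n 0 (P.pos n)).le⟩, by simp⟩
  have hub : ∀ y ∈ E, y ≤ ε / 2 := by
    rintro y ⟨j, hj, u, hu, v, hv, rfl⟩
    have hsub : Icc (P.pt n j) (P.pt n (j + 1)) ⊆ Icc (0 : ℝ) T :=
      Icc_subset_Icc (pt_mem P n j hj.le).1 (pt_mem P n (j + 1) hj).2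
    have h1 : |S u - S v| ≤ oscP S P n := le_osc P S hSb hj hu hv
    have h2 := hδ (S u) (hSb u (hsub hu)) (S v) (hSb v (hsub hv))
      (by rw [Real.dist_eq]; exact lt_of_le_of_lt h1 hlt)
    rw [Real.dist_eq] at h2
    exact h2.le
  have h0 : 0 ≤ sSup E := le_csSup ⟨ε / 2, fun y hy => hub y hy⟩ hne
  have h1 : sSup E ≤ ε / 2 := csSup_le ⟨0, hne⟩ hub
  rw [abs_of_nonneg h0]
  linarith

end LTProp2Aux

open LTProp2Aux

/-- Proposition 2: if `S` has a continuous local time of order `p` along `π` and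
`f ∈ C¹(ℝ)` is strictly monotone, then `f ∘ S` also has a continuous local time of order `p`
along `π`, and `L_t^{f(S),p,c}(f(a)) = |f'(a)|^{p-1} L_t^{S,p,c}(a)`. -/
theorem local_time_of_function_of_path {T : ℝ} (hT : 0 < T) (P : PartitionSeq T)
    (p : ℕ) (hp : Even p) (hp2 : 2 ≤ p)
    (S : ℝ → ℝ) (hS : ContinuousOn S (Icc 0 T))
    (L : ℝ → ℝ → ℝ) (hL : HasCLT P p S L)
    (f : ℝ → ℝ) (hf : ContDiff ℝ 1 f) (hmono : StrictMono f ∨ StrictAnti f) :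
    ∃ L' : ℝ → ℝ → ℝ, HasCLT P p (f ∘ S) L' ∧
      ∀ t ∈ Icc (0 : ℝ) T, ∀ a : ℝ, L' t (f a) = |deriv f a| ^ (p - 1) * L t a := by
  obtain ⟨hosc, hunif, hcont⟩ := hL
  have hfc : Continuous f := hf.continuous
  -- bounds for S on [0,T]
  have himgc : IsCompact (S '' Icc 0 T) := isCompact_Icc.image_of_continuousOn hS
  obtain ⟨lo, hlo⟩ := himgc.bddBelow
  obtain ⟨hi, hhi⟩ := himgc.bddAbove
  set m := lo with hmdef
  set M := max hi lo with hMdef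
  have hmM : m ≤ M := le_max_right hi lo
  have hSb : ∀ u ∈ Icc (0 : ℝ) T, S u ∈ Icc m M := by
    intro u hu
    exact ⟨hlo (mem_image_of_mem S hu), le_trans (hhi (mem_image_of_mem S hu)) (le_max_left _ _)⟩
  -- continuity of L in the space variable
  have hLcont1 : ∀ s : ℝ, Continuous (fun z => L s z) := fun s =>
    hcont.comp (continuous_const.prodMk continuous_id)
  -- vanishing of L outside (m, M)
  have hLvanish : ∀ s ∈ Icc (0 : ℝ) T, ∀ x : ℝ, (x ≤ m ∨ M ≤ x) → L s x = 0 := by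
    intro s hs x hx
    have hz : ∀ z : ℝ, (z ≤ m ∨ M < z) → L s z = 0 := by
      intro z hz
      refine tendsto_nhds_unique ((hunif s hs).tendsto_at z) ?_
      have hzero : ∀ n, discLT S P p n s z = 0 := fun n => by
        rw [discLT_eq_gsum]; exact gsum_vanish P (p - 1) S hSb n s hz
      simp only [hzero]
      exact tendsto_const_nhds
    rcases hx with hx | hx
    · exact hz x (Or.inl hx)
    · rcases eq_or_lt_of_le hx with heq | hx'
      · rw [← heq]
        have h1 : Tendsto (fun z => L s z) (nhdsWithin M (Ioi M)) (nhds (L s M)) :=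
          ((hLcont1 s).tendsto M).mono_left nhdsWithin_le_nhds
        have h2 : Tendsto (fun z => L s z) (nhdsWithin M (Ioi M)) (nhds 0) := by
          refine Filter.Tendsto.congr' ?_ tendsto_const_nhds
          filter_upwards [self_mem_nhdsWithin] with z hz'
          exact (hz z (Or.inr hz')).symm
        exact tendsto_nhds_unique h1 h2
      · exact hz x (Or.inr hx')
  -- injectivity
  have finj : Function.Injective f := by
    rcases hmono with h | h
    exacts [h.injective, h.injective]
  set c := min (f m) (f M) with hcdef
  set d := max (f m) (f M) with hddef
  have hcd : c ≤ d := min_le_max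
  have himg2 : f '' Icc m M = Icc c d := by
    rcases hmono with hm | hm
    · have h1 : f m ≤ f M := hm.monotone hmM
      rw [hcdef, hddef, min_eq_left h1, max_eq_right h1]
      apply Subset.antisymm
      · rintro y ⟨x, hx, rfl⟩
        exact ⟨hm.monotone hx.1, hm.monotone hx.2⟩
      · exact intermediate_value_Icc hmM hfc.continuousOn
    · have h1 : f M ≤ f m := hm.antitone hmM
      rw [hcdef, hddef, min_eq_right h1, max_eq_left h1]
      apply Subset.antisymm
      · rintro y ⟨x, hx, rfl⟩
        exact ⟨hm.antitone hx.2, hm.antitone hx.1⟩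
      · exact intermediate_value_Icc' hmM hfc.continuousOn
  have hsurj : ∀ y ∈ Icc c d, ∃ x ∈ Icc m M, f x = y := by
    intro y hy
    rw [← himg2] at hy
    obtain ⟨x, hx, hfx⟩ := hy
    exact ⟨x, hx, hfx⟩
  have hfSb : ∀ u ∈ Icc (0 : ℝ) T, f (S u) ∈ Icc c d := fun u hu => by
    rw [← himg2]; exact mem_image_of_mem f (hSb u hu)
  -- the homeomorphism between [m, M] and [c, d]
  have hmem' : ∀ x : Icc m M, f x.1 ∈ Icc c d := fun x => by
    rw [← himg2]; exact mem_image_of_mem f x.2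
  set F : Icc m M ≃ Icc c d := Equiv.ofBijective (fun x => ⟨f x.1, hmem' x⟩)
    ⟨fun a b h => Subtype.ext (finj (congrArg Subtype.val h)),
     fun y => by
      obtain ⟨x, hx, hfx⟩ := hsurj y.1 y.2
      exact ⟨⟨x, hx⟩, Subtype.ext hfx⟩⟩ with hFdef
  have hFc : Continuous F := Continuous.subtype_mk (hfc.comp continuous_subtype_val) _
  set e : Icc m M ≃ₜ Icc c d := hFc.homeoOfEquivCompactToT2 with hedef
  set g : ℝ → ℝ :=
    fun y => (e.symm ⟨max c (min y d), ⟨le_max_left _ _, max_le hcd (min_le_right _ _)⟩⟩ : ℝ)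
    with hgdef
  have hgc : Continuous g :=
    continuous_subtype_val.comp (e.symm.continuous.comp
      (Continuous.subtype_mk (continuous_const.max (continuous_id.min continuous_const)) _))
  have hgf : ∀ a : ℝ, g (f a) = max m (min a M) := by
    intro a
    have hqm : max m (min a M) ∈ Icc m M := ⟨le_max_left _ _, max_le hmM (min_le_right _ _)⟩
    have key : f (max m (min a M)) = max c (min (f a) d) := by
      rcases hmono with hm | hm
      · have h1 : f m ≤ f M := hm.monotone hmM
        rw [hm.monotone.map_max, hm.monotone.map_min, hcdef, hddef,
          min_eq_left h1, max_eq_right h1]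
      · have h1 : f M ≤ f m := hm.antitone hmM
        rw [hm.antitone.map_max, hm.antitone.map_min, hcdef, hddef,
          min_eq_right h1, max_eq_left h1]
        exact median h1
    have hsub : (⟨max c (min (f a) d), ⟨le_max_left _ _, max_le hcd (min_le_right _ _)⟩⟩ :
        Icc c d) = e ⟨max m (min a M), hqm⟩ := Subtype.ext key.symm
    show (e.symm ⟨max c (min (f a) d), _⟩ : ℝ) = max m (min a M)
    rw [hsub, Homeomorph.symm_apply_apply]
  have hgclamp : ∀ y₁ y₂ : ℝ, max c (min y₁ d) = max c (min y₂ d) → g y₁ = g y₂ := by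
    intro y₁ y₂ h
    show (e.symm ⟨max c (min y₁ d), _⟩ : ℝ) = (e.symm ⟨max c (min y₂ d), _⟩ : ℝ)
    congr 2
    exact Subtype.ext h
  have hgout : ∀ s ∈ Icc (0 : ℝ) T, ∀ y : ℝ, (y < c ∨ d < y) → L s (g y) = 0 := by
    intro s hs y hy
    rcases hmono with hm | hm
    · have h1 : f m ≤ f M := hm.monotone hmM
      have hcm : c = f m := by rw [hcdef, min_eq_left h1]
      have hdm : d = f M := by rw [hddef, max_eq_right h1]
      rcases hy with hy | hy
      · have : g y = g (f m) := by
          apply hgclamp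
          rw [max_eq_left (le_trans (min_le_left _ _) hy.le), ← hcm,
            min_eq_left hcd, max_eq_left le_rfl]
        rw [this, hgf m, min_eq_left hmM, max_self]
        exact hLvanish s hs m (Or.inl le_rfl)
      · have : g y = g (f M) := by
          apply hgclamp
          rw [min_eq_right hy.le, max_eq_right hcd, ← hdm, min_eq_right (le_refl d),
            max_eq_right hcd]
        rw [this, hgf M, min_self, max_eq_right hmM]
        exact hLvanish s hs M (Or.inr le_rfl)
    · have h1 : f M ≤ f m := hm.antitone hmM
      have hcm : c = f M := by rw [hcdef, min_eq_right h1]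
      have hdm : d = f m := by rw [hddef, max_eq_left h1]
      rcases hy with hy | hy
      · have : g y = g (f M) := by
          apply hgclamp
          rw [max_eq_left (le_trans (min_le_left _ _) hy.le), ← hcm,
            min_eq_left hcd, max_eq_left le_rfl]
        rw [this, hgf M, min_self, max_eq_right hmM]
        exact hLvanish s hs M (Or.inr le_rfl)
      · have : g y = g (f m) := by
          apply hgclamp
          rw [min_eq_right hy.le, max_eq_right hcd, ← hdm, min_eq_right (le_refl d),
            max_eq_right hcd]
        rw [this, hgf m, min_eq_left hmM, max_self]
        exact hLvanish s hs m (Or.inl le_rfl)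
  -- the candidate local time for f ∘ S
  refine ⟨fun s y => |deriv f (g y)| ^ (p - 1) * L s (g y), ⟨?_, ?_, ?_⟩, ?_⟩
  · -- oscillation
    exact osc_comp P S f hSb hfc hosc
  · -- uniform convergence
    intro t ht
    have hq1 : 1 ≤ p - 1 := by omega
    -- bound on L T
    obtain ⟨z0, hz0mem, hz0⟩ := isCompact_Icc.exists_isMaxOn (nonempty_Icc.mpr hmM)
      ((hLcont1 T).continuousOn : ContinuousOn (fun z => L T z) (Icc m M))
    set C := max (L T z0) 0 with hCdef
    have hC : ∀ z, L T z ≤ C := by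
      intro z
      by_cases hzc : z ∈ Icc m M
      · exact le_trans (hz0 hzc) (le_max_left _ _)
      · have : z ≤ m ∨ M ≤ z := by
          by_contra hcon
          push_neg at hcon
          exact hzc ⟨hcon.1.le, hcon.2.le⟩
        rw [hLvanish T ⟨hT.le, le_rfl⟩ z this]
        exact le_max_right _ _
    -- bound on |f'|^(p-1)
    obtain ⟨z1, hz1mem, hz1⟩ := isCompact_Icc.exists_isMaxOn (nonempty_Icc.mpr hmM)
      ((((hf.continuous_deriv le_rfl).abs).pow (p - 1)).continuousOn :
        ContinuousOn (fun z => |deriv f z| ^ (p - 1)) (Icc m M))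
    have hL'in : ∀ x ∈ Icc m M,
        |deriv f (g (f x))| ^ (p - 1) * L t (g (f x)) = |deriv f x| ^ (p - 1) * L t x := by
      intro x hx
      rw [hgf x, min_eq_left hx.2, max_eq_right hx.1]
    have hL'out : ∀ y : ℝ, (y < c ∨ d < y) →
        |deriv f (g y)| ^ (p - 1) * L t (g y) = 0 := by
      intro y hy
      rw [hgout t ht y hy, mul_zero]
    have happly : ∀ (I : ℝ → ℝ → Set ℝ), (∀ a b, I a b ⊆ Set.uIcc a b) →
        (∀ a b x : ℝ, f x ∈ IocV (f a) (f b) ↔ x ∈ I a b) →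
        (∀ s, s ∈ Icc (0 : ℝ) T →
          TendstoUniformly (fun n x => gsum id S P (p - 1) I n s x) (fun x => L s x) atTop) →
        TendstoUniformly (fun n y => discLT (f ∘ S) P p n t y)
          (fun y => |deriv f (g y)| ^ (p - 1) * L t (g y)) atTop := by
      intro I hI hpull hIunif
      exact key_unif hT P hq1 S hmM hSb f hf I hI hpull hfSb hsurj hosc ht
        (fun x => L t x) (fun x => L T x) (hIunif t ht) (hIunif T ⟨hT.le, le_rfl⟩)
        hC (fun z hz => hz1 hz) _ hL'in hL'out
    rcases hmono with hm | hm
    · exact happly IocV (fun a b => Set.Ioc_subset_Icc_self) (pull_mono hm)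
        (fun s hs => hunif s hs)
    · refine happly IcoV (fun a b => Set.Ico_subset_Icc_self) (pull_anti hm) ?_
      intro s hs
      rw [Metric.tendstoUniformly_iff]
      intro ε hε
      have hev := (Metric.tendstoUniformly_iff.mp (hunif s hs)) (ε / 2) (by linarith)
      filter_upwards [hev] with n hn
      intro x
      have h2 : ∀ y, |gsum id S P (p - 1) IocV n s y - L s y| ≤ ε / 2 := by
        intro y
        have := hn y
        rw [Real.dist_eq] at this
        rw [abs_sub_comm]
        exact this.le
      have h3 := unif_transfer P (p - 1) S (fun y => L s y) (hLcont1 s) h2 x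
      rw [Real.dist_eq, abs_sub_comm]
      linarith
  · -- joint continuity
    exact (((hf.continuous_deriv le_rfl).comp (hgc.comp continuous_snd)).abs.pow (p - 1)).mul
      (hcont.comp (continuous_fst.prodMk (hgc.comp continuous_snd)))
  · -- the identity
    intro t ht a
    show |deriv f (g (f a))| ^ (p - 1) * L t (g (f a)) = |deriv f a| ^ (p - 1) * L t a
    rcases le_or_gt a m with ham | ham
    · have hga : g (f a) = m := by
        rw [hgf a, min_eq_left (ham.trans hmM), max_eq_left ham]
      rw [hga, hLvanish t ht m (Or.inl le_rfl), hLvanish t ht a (Or.inl ham),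
        mul_zero, mul_zero]
    · rcases le_or_gt a M with haM | haM
      · have hga : g (f a) = a := by
          rw [hgf a, min_eq_left haM, max_eq_right ham.le]
        rw [hga]
      · have hga : g (f a) = M := by
          rw [hgf a, min_eq_right haM.le, max_eq_right hmM]
        rw [hga, hLvanish t ht M (Or.inr le_rfl), hLvanish t ht a (Or.inr haM.le),
          mul_zero, mul_zero]
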